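/- Let f : ℕ → ℕ be any function with f(q) → ∞ as q → ∞. Then there exist nondecreasing sequences of positive integers (a_n), (b_n), (c_n), each tending to infinity, with c_1 ≥ 1 and c_{n+1} ≥ c_n + b_n for all n, such that a_n b_n² / h_n → 0, Σ_n (c_n + b_n)/h_n < ∞, and the word complexity p of the associated quasi-staircase subshift satisfies p(q)/(q·f(q)) → 0 as q → ∞. -/

import Mathlib

open Filter MeasureTheory
open scoped ENNReal

/-- `n`-fold concatenation (power) of a word. -/
def wpow {α : Type*} (v : List α) (n : ℕ) : List α := (List.replicate n v).flatten

/-- The word `1^k` over the alphabet `{0,1}` (with `0 = false`, `1 = true`). -/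
def ones (k : ℕ) : List Bool := List.replicate k true

/-- The left shift on biinfinite sequences. -/
def shift {A : Type*} (x : ℤ → A) : ℤ → A := fun n => x (n + 1)

/-- The word `x_{[s, s+len)}` read off a biinfinite sequence. -/
def readWord {A : Type*} (x : ℤ → A) (s : ℤ) (len : ℕ) : List A :=
  (List.range len).map (fun i => x (s + (i : ℤ)))

/-- A finite word occurs (as a consecutive subword) in a biinfinite sequence. -/
def occursIn {A : Type*} (w : List A) (x : ℤ → A) : Prop :=
  ∃ k : ℤ, readWord x k w.length = w

/-- The quasi-staircase words: `B 1 = 0` and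
`B (n+1) = (∏_{i=0}^{b n - 1} (B n · 1^{c n + i})^{a n}) · B n`. -/
def qsB (a b c : ℕ → ℕ) : ℕ → List Bool
  | 0 => []
  | 1 => [false]
  | (n+2) =>
      ((List.range (b (n+1))).map
        (fun i => wpow (qsB a b c (n+1) ++ ones (c (n+1) + i)) (a (n+1)))).flatten
        ++ qsB a b c (n+1)

/-- The language of the quasi-staircase subshift: all subwords of some `B n`, `n ≥ 1`. -/
def qsL (a b c : ℕ → ℕ) : Set (List Bool) :=
  {w | ∃ n, 1 ≤ n ∧ w <:+: qsB a b c n}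

/-- The quasi-staircase subshift: biinfinite sequences all of whose finite subwords
lie in the language. -/
def qsX (a b c : ℕ → ℕ) : Set (ℤ → Bool) :=
  {x | ∀ w : List Bool, occursIn w x → w ∈ qsL a b c}

/-- Right-special words of the quasi-staircase subshift: `w`, `w0` and `w1` all lie
in the language. -/
def RS (a b c : ℕ → ℕ) (w : List Bool) : Prop :=
  w ∈ qsL a b c ∧ (w ++ [false]) ∈ qsL a b c ∧ (w ++ [true]) ∈ qsL a b c

/-- The tail length `z(w)`: the number of `1`s at the end of `w`. -/
def ztail (w : List Bool) : ℕ := (w.reverse.takeWhile id).length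

/-- The level-`n` generating words: right-special words containing a `0` whose tail
length lies in `[c n, c (n+1))`. -/
def Wn (a b c : ℕ → ℕ) (n : ℕ) : Set (List Bool) :=
  {w | RS a b c w ∧ false ∈ w ∧ c n ≤ ztail w ∧ ztail w < c (n+1)}

/-- The word complexity of the quasi-staircase subshift. -/
noncomputable def cplx (a b c : ℕ → ℕ) (q : ℕ) : ℕ :=
  Set.ncard {w | w ∈ qsL a b c ∧ w.length = q}

/-- The level-`n` complexity functions. -/
noncomputable def cplxn (a b c : ℕ → ℕ) (n q : ℕ) : ℕ :=
  Set.ncard {w | w ∈ Wn a b c n ∧ w.length < q}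

/-- The height sequence of the quasi-staircase: `h n = |B n|`. -/
def qsh (a b c : ℕ → ℕ) : ℕ → ℕ
  | 0 => 0
  | 1 => 1
  | (n+2) => (a (n+1) * b (n+1) + 1) * qsh a b c (n+1)
      + a (n+1) * b (n+1) * c (n+1) + a (n+1) * b (n+1) * (b (n+1) - 1) / 2

/-- The post-productive sequence `m n = a n * h n + (a n + 1) * (c n + b n - 1)`. -/
def qsm (a b c : ℕ → ℕ) (n : ℕ) : ℕ :=
  a n * qsh a b c n + (a n + 1) * (c n + b n - 1)

/-- The standing quasi-staircase hypotheses: `a`, `b`, `c` are nondecreasing sequences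
of positive integers (for `n ≥ 1`) tending to infinity, with `c 1 ≥ 1` and
`c (n+1) ≥ c n + b n` for all `n ≥ 1`. -/
def QShyp (a b c : ℕ → ℕ) : Prop :=
  (∀ n, 1 ≤ n → 1 ≤ a n ∧ a n ≤ a (n+1)) ∧ Tendsto a atTop atTop ∧
  (∀ n, 1 ≤ n → 1 ≤ b n ∧ b n ≤ b (n+1)) ∧ Tendsto b atTop atTop ∧
  (∀ n, 1 ≤ n → 1 ≤ c n ∧ c n ≤ c (n+1)) ∧ Tendsto c atTop atTop ∧
  (∀ n, 1 ≤ n → c n + b n ≤ c (n+1))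



/- ### Auxiliary development -/

namespace QSaux

/-! ### wpow and ones basics -/

theorem wpow_zero {α : Type*} (v : List α) : wpow v 0 = [] := rfl

theorem wpow_succ {α : Type*} (v : List α) (n : ℕ) : wpow v (n+1) = v ++ wpow v n := by
  simp [wpow, List.replicate_succ]

theorem wpow_succ' {α : Type*} (v : List α) (n : ℕ) : wpow v (n+1) = wpow v n ++ v := by
  induction n with
  | zero => simp [wpow]
  | succ m ih =>
      calc wpow v (m+2) = v ++ wpow v (m+1) := wpow_succ _ _
        _ = v ++ (wpow v m ++ v) := by rw [ih]
        _ = (v ++ wpow v m) ++ v := by rw [List.append_assoc]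
        _ = wpow v (m+1) ++ v := by rw [← wpow_succ]

theorem length_wpow {α : Type*} (v : List α) (n : ℕ) : (wpow v n).length = n * v.length := by
  induction n with
  | zero => simp [wpow]
  | succ m ih => rw [wpow_succ]; simp [ih, Nat.succ_mul]; ring

theorem wpow_prefix {α : Type*} (v : List α) {m n : ℕ} (h : m ≤ n) :
    wpow v m <+: wpow v n := by
  induction n with
  | zero => simp_all
  | succ k ih =>
      rcases Nat.eq_or_lt_of_le h with rfl | hlt
      · exact List.prefix_refl _
      · exact (ih (Nat.lt_succ_iff.mp hlt)).trans ⟨v, (wpow_succ' v k).symm⟩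

@[simp] theorem length_ones (k : ℕ) : (ones k).length = k := by simp [ones]

theorem ones_append (m n : ℕ) : ones (m + n) = ones m ++ ones n := by
  rw [ones, ones, ones, List.replicate_add]

theorem prefix_ones {w : List Bool} {k : ℕ} (h : w <+: ones k) : w = ones w.length := by
  obtain ⟨t, ht⟩ := h
  have : ∀ x ∈ w, x = true := by
    intro x hx
    have : x ∈ ones k := by rw [← ht]; exact List.mem_append_left _ hx
    simpa [ones] using (List.eq_of_mem_replicate this)
  exact List.eq_replicate_of_mem this

theorem infix_ones {w : List Bool} {k : ℕ} (h : w <:+: ones k) : w = ones w.length := by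
  obtain ⟨s, t, hst⟩ := h
  have : ∀ x ∈ w, x = true := by
    intro x hx
    have : x ∈ ones k := by rw [← hst]; exact List.mem_append_left _ (List.mem_append_right _ hx)
    simpa [ones] using (List.eq_of_mem_replicate this)
  exact List.eq_replicate_of_mem this

/-! ### windows -/

/-- the window of length `q` starting at `s`. -/
def win (X : List Bool) (q s : ℕ) : List Bool := (X.drop s).take q

theorem win_infix (X : List Bool) (q s : ℕ) : win X q s <:+: X :=
  ((X.drop s).take_prefix q).isInfix.trans (X.drop_suffix s).isInfix

theorem length_win {X : List Bool} {q s : ℕ} (h : s + q ≤ X.length) :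
    (win X q s).length = q := by
  simp [win]; omega

theorem exists_win {w X : List Bool} (h : w <:+: X) :
    ∃ s, s + w.length ≤ X.length ∧ w = win X w.length s := by
  obtain ⟨u, t, hut⟩ := h
  refine ⟨u.length, ?_, ?_⟩
  · rw [← hut]; simp
  · rw [win, ← hut]
    rw [List.drop_append]
    simp

theorem win_prefix_agree {Y Z : List Bool} (h : Y <+: Z) {q s : ℕ} (hs : s + q ≤ Y.length) :
    win Z q s = win Y q s := by
  obtain ⟨R, rfl⟩ := h
  rw [win, List.drop_append, List.take_append]
  have h1 : s - Y.length = 0 := by omega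
  have h2 : q - (Y.drop s).length = 0 := by simp; omega
  rw [h1, h2]
  simp [win]

/-- the downward periodicity step inside `wpow V a`. -/
theorem win_wpow_period {V X : List Bool} {a q s : ℕ} (hV : 0 < V.length)
    (h1 : V.length ≤ s) (h2 : s + q ≤ a * V.length) :
    win (wpow V a ++ X) q s = win (wpow V a ++ X) q (s - V.length) := by
  have ha : 1 ≤ a := by
    by_contra h
    interval_cases a
    omega
  obtain ⟨a, rfl⟩ : ∃ a', a = a' + 1 := ⟨a - 1, by omega⟩
  have hlen : (wpow V (a+1)).length = (a+1) * V.length := length_wpow V (a+1)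
  have e1 : win (wpow V (a+1) ++ X) q s = win (wpow V (a+1)) q s :=
    win_prefix_agree ⟨X, rfl⟩ (by omega)
  have e2 : win (wpow V (a+1) ++ X) q (s - V.length) = win (wpow V (a+1)) q (s - V.length) :=
    win_prefix_agree ⟨X, rfl⟩ (by omega)
  rw [e1, e2]
  have e3 : win (wpow V (a+1)) q s = win (wpow V a) q (s - V.length) := by
    rw [wpow_succ, win, List.drop_append]
    have : s - V.length ≥ 0 := by omega
    have hd : V.drop s = [] := by
      apply List.drop_eq_nil_of_le; omega
    rw [hd, List.nil_append, win]
  have e4 : win (wpow V (a+1)) q (s - V.length) = win (wpow V a) q (s - V.length) := by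
    apply win_prefix_agree (wpow_prefix V (Nat.le_succ a))
    rw [length_wpow]
    have : (a+1) * V.length = a * V.length + V.length := by ring
    omega
  rw [e3, e4]

end QSaux

namespace QSaux

/-! ### counting subwords -/

def SubQ (q : ℕ) (X : List Bool) : Set (List Bool) := {w | w.length = q ∧ w <:+: X}

theorem subq_subset_image (q : ℕ) (X : List Bool) :
    SubQ q X ⊆ (fun s => win X q s) '' ↑(Finset.range (X.length + 1)) := by
  rintro w ⟨hl, hw⟩
  obtain ⟨s, hs, hws⟩ := exists_win hw
  rw [hl] at hs hws
  exact ⟨s, by simp; omega, hws.symm⟩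

theorem subq_finite (q : ℕ) (X : List Bool) : (SubQ q X).Finite :=
  Set.Finite.subset (Set.Finite.image _ (Finset.finite_toSet _)) (subq_subset_image q X)

theorem ncard_subq_le (q : ℕ) (X : List Bool) : (SubQ q X).ncard ≤ X.length + 1 := by
  refine le_trans (Set.ncard_le_ncard (subq_subset_image q X)
    (Set.Finite.image _ (Finset.finite_toSet _))) ?_
  refine le_trans (Set.ncard_image_le (Finset.finite_toSet _)) ?_
  rw [Set.ncard_coe_finset]; simp

theorem ncard_cover2 {S A B : Set (List Bool)} (h : S ⊆ A ∪ B) (hA : A.Finite) (hB : B.Finite) :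
    S.ncard ≤ A.ncard + B.ncard :=
  le_trans (Set.ncard_le_ncard h (hA.union hB)) (Set.ncard_union_le A B)

theorem ncard_cover3 {S A B C : Set (List Bool)} (h : S ⊆ A ∪ B ∪ C)
    (hA : A.Finite) (hB : B.Finite) (hC : C.Finite) :
    S.ncard ≤ A.ncard + B.ncard + C.ncard :=
  le_trans (Set.ncard_le_ncard h ((hA.union hB).union hC))
    (le_trans (Set.ncard_union_le _ _) (by
      have := Set.ncard_union_le A B
      omega))

theorem ncard_finset_image_le {α : Type*} (f : α → List Bool) (s : Finset α) :
    ((f '' ↑s)).ncard ≤ s.card := by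
  refine le_trans (Set.ncard_image_le (Finset.finite_toSet _)) ?_
  rw [Set.ncard_coe_finset]

/-- peel an arbitrary prefix, paying its length. -/
theorem subq_peel_prefix (q : ℕ) (P X : List Bool) :
    (SubQ q (P ++ X)).ncard ≤ P.length + (SubQ q X).ncard := by
  have cover : SubQ q (P ++ X) ⊆
      ((fun s => win (P ++ X) q s) '' ↑(Finset.range P.length)) ∪ SubQ q X := by
    rintro w ⟨hl, hw⟩
    obtain ⟨s, hs, hws⟩ := exists_win hw
    rw [hl] at hs hws
    subst hws
    by_cases hsP : s < P.length
    · exact Or.inl ⟨s, by simpa using hsP, rfl⟩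
    · right
      have : win (P ++ X) q s = win X q (s - P.length) := by
        rw [win, List.drop_append, List.drop_eq_nil_of_le (by omega),
          List.nil_append, win]
      rw [this]
      refine ⟨?_, win_infix _ _ _⟩
      apply length_win
      rw [List.length_append] at hs
      omega
  refine le_trans (ncard_cover2 cover (Set.Finite.image _ (Finset.finite_toSet _))
    (subq_finite q X)) ?_
  have := ncard_finset_image_le (fun s => win (P ++ X) q s) (Finset.range P.length)
  rw [Finset.card_range] at this
  omega

/-- peel a power block, paying `|V| + q` thanks to periodicity. -/
theorem subq_peel_wpow (q : ℕ) {V : List Bool} (X : List Bool) (hV : 0 < V.length) (a : ℕ) :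
    (SubQ q (wpow V a ++ X)).ncard ≤ V.length + q + (SubQ q X).ncard := by
  set T := wpow V a ++ X with hT
  have hlen : T.length = a * V.length + X.length := by
    rw [hT, List.length_append, length_wpow]
  -- reduction
  have reduce : ∀ s, s + q ≤ T.length →
      ∃ s', win T q s = win T q s' ∧
        (s' < V.length ∨ (a * V.length + 1 - q ≤ s' ∧ s' < a * V.length) ∨
          (a * V.length ≤ s' ∧ s' + q ≤ T.length)) := by
    intro s
    induction s using Nat.strong_induction_on with
    | _ s ih =>
      intro hs
      by_cases h1 : s < V.length
      · exact ⟨s, rfl, Or.inl h1⟩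
      by_cases h2 : a * V.length ≤ s
      · exact ⟨s, rfl, Or.inr (Or.inr ⟨h2, hs⟩)⟩
      by_cases h3 : a * V.length < s + q
      · exact ⟨s, rfl, Or.inr (Or.inl ⟨by omega, by omega⟩)⟩
      · have hstep : win T q s = win T q (s - V.length) :=
          win_wpow_period hV (by omega) (by omega)
        obtain ⟨s', h', hc⟩ := ih (s - V.length) (by omega) (by omega)
        exact ⟨s', hstep.trans h', hc⟩
  have cover : SubQ q T ⊆
      ((fun s => win T q s) '' ↑(Finset.range V.length)) ∪
      ((fun s => win T q s) '' ↑(Finset.Ico (a * V.length + 1 - q) (a * V.length))) ∪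
      SubQ q X := by
    rintro w ⟨hl, hw⟩
    obtain ⟨s, hs, hws⟩ := exists_win hw
    rw [hl] at hs hws
    subst hws
    obtain ⟨s', heq, hc⟩ := reduce s hs
    rcases hc with h | h | h
    · exact Or.inl (Or.inl ⟨s', by simpa using h, heq.symm⟩)
    · exact Or.inl (Or.inr ⟨s', by simp [h.1, h.2], heq.symm⟩)
    · right
      have : win T q s' = win X q (s' - a * V.length) := by
        rw [win, hT, List.drop_append, List.drop_eq_nil_of_le
          (by rw [length_wpow]; omega), List.nil_append, win, length_wpow]
      rw [heq, this]
      refine ⟨?_, win_infix _ _ _⟩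
      apply length_win
      omega
  refine le_trans (ncard_cover3 cover (Set.Finite.image _ (Finset.finite_toSet _))
    (Set.Finite.image _ (Finset.finite_toSet _)) (subq_finite q X)) ?_
  have i1 := ncard_finset_image_le (fun s => win T q s) (Finset.range V.length)
  have i2 := ncard_finset_image_le (fun s => win T q s)
    (Finset.Ico (a * V.length + 1 - q) (a * V.length))
  rw [Finset.card_range] at i1
  rw [Nat.card_Ico] at i2
  have : a * V.length - (a * V.length + 1 - q) ≤ q := by omega
  omega

end QSaux

namespace QSaux

/-! ### infix trichotomy and absorption -/

theorem infix_split {w X Y : List Bool} (h : w <:+: X ++ Y) :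
    w <:+: X ∨ w <:+: Y ∨
      ∃ x y, w = x ++ y ∧ x ≠ [] ∧ y ≠ [] ∧ x <:+ X ∧ y <+: Y := by
  obtain ⟨u, t, hut⟩ := h
  rw [List.append_assoc] at hut
  by_cases h1 : u.length + w.length ≤ X.length
  · left
    have e1 : w = win (X ++ Y) w.length u.length := by
      rw [win, ← hut, List.drop_append, List.drop_length,
        Nat.sub_self, List.drop_zero, List.nil_append, List.take_append,
        List.take_length, Nat.sub_self, List.take_zero, List.append_nil]
    rw [e1, win_prefix_agree ⟨Y, rfl⟩ h1]
    exact win_infix _ _ _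
  by_cases h2 : X.length ≤ u.length
  · right; left
    have e1 : w = win Y w.length (u.length - X.length) := by
      have e2 : (X ++ Y).drop u.length = Y.drop (u.length - X.length) := by
        rw [List.drop_append, List.drop_eq_nil_of_le h2, List.nil_append]
      rw [win, ← e2, ← hut, List.drop_append, List.drop_length,
        Nat.sub_self, List.drop_zero, List.nil_append, List.take_append,
        List.take_length, Nat.sub_self, List.take_zero, List.append_nil]
    rw [e1]
    exact win_infix _ _ _
  · right; right
    push_neg at h1 h2
    refine ⟨w.take (X.length - u.length), w.drop (X.length - u.length),
      (w.take_append_drop _).symm, ?_, ?_, ?_, ?_⟩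
    · apply List.ne_nil_of_length_pos
      rw [List.length_take]
      exact lt_min_iff.mpr ⟨by omega, by omega⟩
    · apply List.ne_nil_of_length_pos
      rw [List.length_drop]
      omega
    · -- X = u ++ w.take (X.length - u.length)
      have h3 : X = (u ++ (w ++ t)).take X.length := by
        rw [hut, List.take_append, List.take_length, Nat.sub_self,
          List.take_zero, List.append_nil]
      have h4 : (u ++ (w ++ t)).take X.length = u ++ w.take (X.length - u.length) := by
        rw [List.take_append, List.take_of_length_le (le_of_lt h2),
          List.take_append,
          (show X.length - u.length - w.length = 0 by omega), List.take_zero, List.append_nil]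
      exact ⟨u, h4.symm.trans h3.symm⟩
    · -- Y = w.drop (X.length - u.length) ++ t
      have h3 : Y = (u ++ (w ++ t)).drop X.length := by
        rw [hut, List.drop_append, List.drop_length, Nat.sub_self,
          List.drop_zero, List.nil_append]
      have h4 : (u ++ (w ++ t)).drop X.length = w.drop (X.length - u.length) ++ t := by
        rw [List.drop_append, List.drop_eq_nil_of_le (le_of_lt h2),
          List.nil_append, List.drop_append,
          (show X.length - u.length - w.length = 0 by omega), List.drop_zero]
      exact ⟨t, h4.symm.trans h3.symm⟩

theorem ones_absorb {w X : List Bool} {k L : ℕ} (hL : w.length ≤ L)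
    (h : w <:+: ones k ++ X) : w <:+: ones L ++ X := by
  by_cases hkL : k ≤ L
  · refine h.trans ?_
    have e : ones L ++ X = ones (L - k) ++ (ones k ++ X) := by
      rw [← List.append_assoc, ← ones_append]
      congr 2
      omega
    rw [e]
    exact (List.suffix_append (ones (L - k)) (ones k ++ X)).isInfix
  · rcases infix_split h with h1 | h1 | ⟨x, y, rfl, hx, hy, hxs, hyp⟩
    · rw [infix_ones h1]
      refine List.IsPrefix.isInfix ?_
      have e : ones L = ones w.length ++ ones (L - w.length) := by
        rw [← ones_append]; congr 1; omega
      rw [e, List.append_assoc]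
      exact (ones w.length).prefix_append _
    · exact h1.trans ((ones L).suffix_append X).isInfix
    · obtain ⟨n, rfl⟩ : ∃ n, x = ones n := ⟨x.length, infix_ones hxs.isInfix⟩
      obtain ⟨r, hr⟩ := hyp
      have hxL : n ≤ L := by
        have := hL
        simp at this
        omega
      refine ⟨ones (L - n), r, ?_⟩
      calc ones (L - n) ++ (ones n ++ y) ++ r
          = (ones (L - n) ++ ones n) ++ (y ++ r) := by simp [List.append_assoc]
        _ = ones L ++ X := by
            rw [← ones_append, hr, (show L - n + n = L by omega)]

/-! ### the chain word and the master trichotomy -/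

def CH (B : List Bool) (q : ℕ) : List ℕ → List Bool
  | [] => B ++ ones q
  | g :: t => B ++ ones g ++ CH B q t

theorem CH_starts (B : List Bool) (q : ℕ) (gs : List ℕ) : B <+: CH B q gs := by
  cases gs with
  | nil => exact ⟨ones q, rfl⟩
  | cons g t => exact ⟨ones g ++ CH B q t, by simp [CH]⟩

theorem master {B : List Bool} {q : ℕ} :
    ∀ gs : List ℕ, (∀ g ∈ gs, 1 ≤ g ∧ q ≤ B.length + g) → ∀ w : List Bool, w.length = q →
    w <:+: ones q ++ CH B q gs →
    w <:+: ones q ++ B ++ ones q ∨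
    ∃ u g, g ∈ gs ∧ 1 ≤ u ∧ u + g < q ∧
      w = (ones q ++ B).drop ((ones q ++ B).length - u) ++ ones g ++ B.take (q - u - g) := by
  intro gs
  induction gs with
  | nil =>
      intro _ w hwl hw
      left
      rw [CH, ← List.append_assoc] at hw
      exact hw
  | cons g t ih =>
      intro hg w hwl hw
      rw [CH, ← List.append_assoc, ← List.append_assoc, List.append_assoc (ones q ++ B)] at hw
      rcases infix_split hw with h1 | h1 | ⟨x, y, rfl, hx, hy, hxs, hyp⟩
      · left
        exact h1.trans ⟨[], ones q, by simp⟩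
      · have h2 : w <:+: ones q ++ CH B q t := ones_absorb (le_of_eq hwl) h1
        rcases ih (fun g' hg' => hg g' (List.mem_cons_of_mem _ hg')) w hwl h2 with
          h3 | ⟨u, g', hg', rest⟩
        · exact Or.inl h3
        · exact Or.inr ⟨u, g', List.mem_cons_of_mem _ hg', rest⟩
      · have hlen : x.length + y.length = q := by simpa using hwl
        by_cases hyg : y.length ≤ g
        · -- y is all ones : stay at this level
          left
          have hyo : y = ones y.length :=
            prefix_ones (List.prefix_of_prefix_length_le hyp (List.prefix_append _ _)
              (by simpa using hyg))
          obtain ⟨r, hr⟩ := hxs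
          refine ⟨r, ones (q - y.length), ?_⟩
          calc r ++ (x ++ y) ++ ones (q - y.length)
              = (r ++ x) ++ (y ++ ones (q - y.length)) := by simp [List.append_assoc]
            _ = (ones q ++ B) ++ (ones y.length ++ ones (q - y.length)) := by rw [hr, ← hyo]
            _ = (ones q ++ B) ++ ones q := by rw [← ones_append]; congr 2; omega
        · -- y crosses the gap completely
          right
          push_neg at hyg
          have h1 : y.take g = ones g := by
            have e1 := prefix_ones (List.prefix_of_prefix_length_le
              ((y.take_prefix g).trans hyp) (List.prefix_append _ _) (by simp))
            rw [e1]
            congr 1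
            rw [List.length_take]
            omega
          have hyo : y = ones g ++ y.drop g := by
            conv_lhs => rw [← y.take_append_drop g]
            rw [h1]
          set z := y.drop g with hz
          have hzlen : z.length = y.length - g := by rw [hz]; simp
          have hzCH : z <+: CH B q t := by
            obtain ⟨r, hr⟩ := hyp
            rw [hyo, List.append_assoc] at hr
            exact ⟨r, List.append_cancel_left hr⟩
          have hgg := hg g ((List.mem_cons_self (a := g) (l := t)))
          have hzB : z <+: B := by
            apply List.prefix_of_prefix_length_le hzCH (CH_starts B q t)
            omega
          refine ⟨x.length, g, (List.mem_cons_self (a := g) (l := t)), ?_, by omega, ?_⟩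
          · rcases Nat.eq_zero_or_pos x.length with h0 | h0
            · exact absurd (List.eq_nil_of_length_eq_zero h0) hx
            · exact h0
          · have hxw : x = (ones q ++ B).drop ((ones q ++ B).length - x.length) := by
              obtain ⟨r, hr⟩ := hxs
              have hrl : (ones q ++ B).length - x.length = r.length := by
                have := congrArg List.length hr
                simp at this ⊢
                omega
              rw [hrl, ← hr, List.drop_left]
            have hzw : z = B.take (q - x.length - g) := by
              obtain ⟨r, hr⟩ := hzB
              have : q - x.length - g = z.length := by omega
              rw [this, ← hr, List.take_left]
            rw [hyo, ← hxw, ← hzw, List.append_assoc]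

end QSaux


namespace QSaux

variable (a b c : ℕ → ℕ)

/-- the list of gap lengths of the level-`m` decomposition. -/
def gapsL (m : ℕ) : List ℕ :=
  ((List.range (b m)).map (fun i => List.replicate (a m) (c m + i))).flatten

theorem mem_gapsL {g m : ℕ} (h : g ∈ gapsL a b c m) : ∃ i, i < b m ∧ g = c m + i := by
  rw [gapsL, List.mem_flatten] at h
  obtain ⟨l, hl, hg⟩ := h
  rw [List.mem_map] at hl
  obtain ⟨i, hi, rfl⟩ := hl
  exact ⟨i, by simpa using hi, List.eq_of_mem_replicate hg⟩

theorem CH_eq (B : List Bool) (q : ℕ) (gs : List ℕ) :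
    CH B q gs = (gs.map (fun g => B ++ ones g)).flatten ++ (B ++ ones q) := by
  induction gs with
  | nil => simp [CH]
  | cons g t ih => rw [CH, ih]; simp [List.append_assoc]

theorem qsB_CH (n q : ℕ) :
    qsB a b c (n+2) ++ ones q = CH (qsB a b c (n+1)) q (gapsL a b c (n+1)) := by
  rw [CH_eq, qsB]
  rw [List.append_assoc]
  congr 1
  simp only [gapsL, List.map_flatten, List.map_map, List.flatten_flatten, Function.comp,
    List.map_replicate, wpow]
  congr 1
  apply List.map_congr_left
  intro i _
  simp [List.map_replicate]

/-- positivity of length -/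
theorem qsB_len_pos : ∀ n, 1 ≤ n → 1 ≤ (qsB a b c n).length := by
  intro n h
  induction n with
  | zero => omega
  | succ m ih =>
      rcases Nat.eq_zero_or_pos m with rfl | hm
      · simp [qsB]
      · have := ih hm
        obtain ⟨k, rfl⟩ : ∃ k, m = k + 1 := ⟨m - 1, by omega⟩
        rw [qsB]
        rw [List.length_append]
        omega

/-- prefix chain -/
theorem qsB_prefix_succ (n : ℕ) (ha : 1 ≤ a (n+1)) (hb : 1 ≤ b (n+1)) :
    qsB a b c (n+1) <+: qsB a b c (n+2) := by
  rw [qsB]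
  obtain ⟨k, hk⟩ : ∃ k, b (n+1) = k + 1 := ⟨b (n+1) - 1, by omega⟩
  obtain ⟨j, hj⟩ : ∃ j, a (n+1) = j + 1 := ⟨a (n+1) - 1, by omega⟩
  rw [hk, List.range_succ_eq_map, List.map_cons, List.flatten_cons, hj, wpow_succ]
  refine ⟨(ones (c (n+1) + 0) ++ (wpow (qsB a b c (n+1) ++ ones (c (n+1) + 0)) j ++
    ((List.map Nat.succ (List.range k)).map
      (fun i => wpow (qsB a b c (n+1) ++ ones (c (n+1) + i)) (j+1))).flatten)) ++
      qsB a b c (n+1), ?_⟩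
  simp [List.append_assoc]

theorem qsB_prefix_mono (ha : ∀ n, 1 ≤ n → 1 ≤ a n) (hb : ∀ n, 1 ≤ n → 1 ≤ b n) :
    ∀ m n, 1 ≤ m → m ≤ n → qsB a b c m <+: qsB a b c n := by
  intro m n hm hmn
  induction n with
  | zero => omega
  | succ k ih =>
      rcases Nat.eq_or_lt_of_le hmn with rfl | hlt
      · exact List.prefix_refl _
      · have hk : m ≤ k := by omega
        have h1 : 1 ≤ k := le_trans hm hk
        refine (ih hk).trans ?_
        obtain ⟨j, rfl⟩ : ∃ j, k = j + 1 := ⟨k - 1, by omega⟩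
        exact qsB_prefix_succ a b c j (ha _ (by omega)) (hb _ (by omega))

/-- length of qsB equals qsh -/
theorem sumAux (A h C : ℕ) : ∀ B : ℕ,
    (((List.range B).map (fun i => A * (h + (C + i)))).sum) * 2
      = 2 * A * B * h + 2 * A * B * C + A * (B * (B - 1)) := by
  intro B
  induction B with
  | zero => simp
  | succ k ih =>
      rw [List.range_succ, List.map_append, List.sum_append]
      simp only [List.map_cons, List.map_nil, List.sum_cons, List.sum_nil]
      have expand : (((List.range k).map (fun i => A * (h + (C + i)))).sum +
          (A * (h + (C + k)) + 0)) * 2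
          = (((List.range k).map (fun i => A * (h + (C + i)))).sum) * 2
            + (A * (h + (C + k))) * 2 := by ring
      rw [expand, ih]
      rcases Nat.eq_zero_or_pos k with rfl | hk
      · simp
        ring
      · obtain ⟨j, rfl⟩ : ∃ j, k = j + 1 := ⟨k - 1, by omega⟩
        simp only [Nat.add_sub_cancel]
        ring

theorem length_qsB : ∀ n, (qsB a b c (n+1)).length = qsh a b c (n+1) := by
  intro n
  induction n with
  | zero => simp [qsB, qsh]
  | succ m ih =>
      rw [qsB, qsh, List.length_append, ih, List.length_flatten, List.map_map]
      have e1 : (List.map (List.length ∘ fun i =>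
          wpow (qsB a b c (m+1) ++ ones (c (m+1) + i)) (a (m+1))) (List.range (b (m+1))))
          = (List.range (b (m+1))).map
            (fun i => a (m+1) * (qsh a b c (m+1) + (c (m+1) + i))) := by
        apply List.map_congr_left
        intro i _
        simp only [Function.comp_apply, length_wpow, List.length_append, length_ones, ih]
      rw [e1]
      have e2 := sumAux (a (m+1)) (qsh a b c (m+1)) (c (m+1)) (b (m+1))
      have e3 : 2 ∣ b (m+1) * (b (m+1) - 1) := by
        rcases Nat.eq_zero_or_pos (b (m+1)) with h0 | h0
        · simp [h0]
        · obtain ⟨j, hj⟩ : ∃ j, b (m+1) = j + 1 := ⟨b (m+1) - 1, by omega⟩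
          rw [hj]
          simp only [Nat.add_sub_cancel]
          rcases Nat.even_or_odd j with he | ho
          · obtain ⟨x, hx⟩ := he
            exact ⟨x * (j+1) + 0, by rw [hx]; ring⟩
          · obtain ⟨x, hx⟩ := ho
            exact ⟨(x+1)*(2*x+1), by rw [hx]; ring⟩
      obtain ⟨K, hK⟩ := e3
      have e4 : a (m+1) * b (m+1) * (b (m+1) - 1) / 2 = a (m+1) * K := by
        rw [(show a (m+1) * b (m+1) * (b (m+1) - 1) = 2 * (a (m+1) * K) by
          rw [mul_assoc, hK]; ring)]
        exact Nat.mul_div_cancel_left _ (by omega)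
      rw [e4]
      have e5 : a (m+1) * (b (m+1) * (b (m+1) - 1)) = 2 * (a (m+1) * K) := by
        rw [hK]; ring
      -- combine: sum*2 = 2abh + 2abc + 2aK ; goal : sum + h = (ab+1)h + abc + aK
      set S := (((List.range (b (m+1))).map
        (fun i => a (m+1) * (qsh a b c (m+1) + (c (m+1) + i)))).sum)
      rw [e5] at e2
      -- e2 : S * 2 = 2*a*b*h + 2*a*b*c + 2*(a*K)
      nlinarith [e2]

end QSaux


namespace QSaux

structure Nice (a b c : ℕ → ℕ) : Prop where
  ha : ∀ n, 1 ≤ n → 1 ≤ a n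
  hb : ∀ n, 1 ≤ n → 1 ≤ b n
  hc : ∀ n, 1 ≤ n → 1 ≤ c n
  hcm : ∀ n, 1 ≤ n → c n ≤ c (n+1)
  hbm : ∀ n, 1 ≤ n → b n ≤ b (n+1)
  hbc : ∀ n, 1 ≤ n → b n ≤ c n

variable {a b c : ℕ → ℕ}

theorem c_mono (N : Nice a b c) : ∀ m n, 1 ≤ m → m ≤ n → c m ≤ c n := by
  intro m n h1 h2
  induction n with
  | zero => omega
  | succ k ih =>
      rcases Nat.eq_or_lt_of_le h2 with rfl | hlt
      · rfl
      · exact le_trans (ih (by omega)) (N.hcm k (by omega))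

theorem b_mono (N : Nice a b c) : ∀ m n, 1 ≤ m → m ≤ n → b m ≤ b n := by
  intro m n h1 h2
  induction n with
  | zero => omega
  | succ k ih =>
      rcases Nat.eq_or_lt_of_le h2 with rfl | hlt
      · rfl
      · exact le_trans (ih (by omega)) (N.hbm k (by omega))

theorem gap_bounds (N : Nice a b c) {g m : ℕ} (hm : 1 ≤ m) (h : g ∈ gapsL a b c m) :
    c m ≤ g ∧ g < c m + b m := by
  obtain ⟨i, hi, rfl⟩ := mem_gapsL a b c h
  omega

theorem descent (N : Nice a b c) {q n : ℕ} (hn : 1 ≤ n) (hq : 1 ≤ q) (hqc : q ≤ c (n+1)) :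
    ∀ j (w : List Bool), w.length = q →
      w <:+: ones q ++ qsB a b c (n+1+j) ++ ones q →
      w <:+: ones q ++ qsB a b c (n+1) ++ ones q := by
  intro j
  induction j with
  | zero => intro w _ hw; exact hw
  | succ j ih =>
      intro w hwl hw
      have e : n + 1 + (j + 1) = (n + j) + 2 := by omega
      rw [e, List.append_assoc, qsB_CH] at hw
      have hmth : ∀ g ∈ gapsL a b c (n+j+1), 1 ≤ g ∧ q ≤ (qsB a b c (n+j+1)).length + g := by
        intro g hg
        have hb := gap_bounds N (by omega) hg
        have hcc : c (n+1) ≤ c (n+j+1) := c_mono N _ _ (by omega) (by omega)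
        constructor
        · have := N.hc (n+j+1) (by omega); omega
        · have : q ≤ g := by omega
          omega
      rcases master (gapsL a b c (n+j+1)) hmth w hwl hw with h1 | ⟨u, g, hg, hu, hug, _⟩
      · have : n + j + 1 = n + 1 + j := by omega
        rw [this] at h1
        exact ih w hwl h1
      · exfalso
        have hb := gap_bounds N (show 1 ≤ n + j + 1 by omega) hg
        have hcc : c (n+1) ≤ c (n+j+1) := c_mono N _ _ (by omega) (by omega)
        omega

theorem climb (N : Nice a b c) {q m : ℕ} (hm : 1 ≤ m) (hq : 1 ≤ q)
    (hqm : q ≤ (qsB a b c m).length + c m) :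
    (SubQ q (ones q ++ qsB a b c (m+1) ++ ones q)).ncard
      ≤ (SubQ q (ones q ++ qsB a b c m ++ ones q)).ncard + q * b m := by
  obtain ⟨k, rfl⟩ : ∃ k, m = k + 1 := ⟨m - 1, by omega⟩
  set B := qsB a b c (k+1) with hB
  set φ : ℕ × ℕ → List Bool := fun p =>
    (ones q ++ B).drop ((ones q ++ B).length - p.1) ++ ones p.2 ++ B.take (q - p.1 - p.2)
    with hφ
  have cover : SubQ q (ones q ++ qsB a b c (k+2) ++ ones q) ⊆
      SubQ q (ones q ++ B ++ ones q) ∪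
        (φ '' ↑((Finset.range q) ×ˢ ((Finset.range (b (k+1))).image (fun i => c (k+1) + i)))) := by
    rintro w ⟨hwl, hw⟩
    rw [List.append_assoc, qsB_CH] at hw
    have hmth : ∀ g ∈ gapsL a b c (k+1), 1 ≤ g ∧ q ≤ B.length + g := by
      intro g hg
      have hgb := gap_bounds N (by omega) hg
      have := N.hc (k+1) (by omega)
      exact ⟨by omega, by omega⟩
    rcases master (gapsL a b c (k+1)) hmth w hwl hw with h1 | ⟨u, g, hg, hu, hug, hwe⟩
    · exact Or.inl ⟨hwl, h1⟩
    · right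
      obtain ⟨i, hi, rfl⟩ := mem_gapsL a b c hg
      refine ⟨(u, c (k+1) + i), ?_, ?_⟩
      · simp only [Finset.coe_product, Set.mem_prod, Finset.mem_coe, Finset.mem_range,
          Finset.mem_image]
        have := N.hc (k+1) (by omega)
        exact ⟨by omega, ⟨i, by simpa using hi, rfl⟩⟩
      · rw [hφ, hwe]
  refine le_trans (ncard_cover2 cover (subq_finite _ _)
    (Set.Finite.image _ (Finset.finite_toSet _))) ?_
  have h2 : ((φ '' ↑((Finset.range q) ×ˢ ((Finset.range (b (k+1))).image
      (fun i => c (k+1) + i))))).ncard ≤ q * b (k+1) := by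
    refine le_trans (ncard_finset_image_le φ _) ?_
    rw [Finset.card_product, Finset.card_range]
    exact Nat.mul_le_mul_left q (le_trans (Finset.card_image_le) (by simp))
  omega

theorem peel_runs (q : ℕ) {B : List Bool} (hB : 1 ≤ B.length) (am cm : ℕ) (Z : List Bool) :
    ∀ L : List ℕ,
      (SubQ q ((L.map (fun i => wpow (B ++ ones (cm + i)) am)).flatten ++ Z)).ncard
        ≤ (L.map (fun i => B.length + cm + i + q)).sum + (SubQ q Z).ncard := by
  intro L
  induction L with
  | nil => simp
  | cons i t ih =>
      rw [List.map_cons, List.flatten_cons, List.append_assoc]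
      refine le_trans (subq_peel_wpow q _ (by simp; omega) am) ?_
      have := ih
      rw [List.map_cons, List.sum_cons]
      have e : (B ++ ones (cm + i)).length = B.length + cm + i := by simp; omega
      rw [e] at *
      omega

theorem base_count (N : Nice a b c) {q m : ℕ} (hm : 1 ≤ m) (hq : 1 ≤ q)
    (hqm : (qsB a b c m).length + c m ≤ q) :
    (SubQ q (ones q ++ qsB a b c (m+1) ++ ones q)).ncard ≤ q * (3 * b m + 3) + 1 := by
  obtain ⟨k, rfl⟩ : ∃ k, m = k + 1 := ⟨m - 1, by omega⟩
  set B := qsB a b c (k+1) with hB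
  have hBpos : 1 ≤ B.length := qsB_len_pos a b c (k+1) (by omega)
  have e : ones q ++ qsB a b c (k+2) ++ ones q
      = ones q ++ (((List.range (b (k+1))).map
          (fun i => wpow (B ++ ones (c (k+1) + i)) (a (k+1)))).flatten ++ (B ++ ones q)) := by
    rw [qsB]
    simp [List.append_assoc, hB]
  rw [e]
  refine le_trans (subq_peel_prefix q (ones q) _) ?_
  refine le_trans (Nat.add_le_add_left (peel_runs q hBpos (a (k+1)) (c (k+1)) _ _) _) ?_
  have hsum : ((List.range (b (k+1))).map (fun i => B.length + c (k+1) + i + q)).sum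
      ≤ b (k+1) * (3 * q) := by
    have hd : ∀ x ∈ (List.range (b (k+1))).map (fun i => B.length + c (k+1) + i + q),
        x ≤ 3 * q := by
      intro x hx
      rw [List.mem_map] at hx
      obtain ⟨i, hi, rfl⟩ := hx
      rw [List.mem_range] at hi
      have h1 : i < b (k+1) := hi
      have h2 : b (k+1) ≤ c (k+1) := N.hbc (k+1) (by omega)
      omega
    have := List.sum_le_card_nsmul _ (3 * q) hd
    simpa using this
  have hZ : (SubQ q (B ++ ones q)).ncard ≤ 2 * q := by
    refine le_trans (ncard_subq_le q _) ?_
    have := N.hc (k+1) (by omega)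
    simp
    omega
  have : (ones q).length = q := by simp
  rw [this]
  have hq3 : q + (b (k+1) * (3 * q) + 2 * q) ≤ q * (3 * b (k+1) + 3) := by ring_nf; omega
  omega

end QSaux


namespace QSaux

variable {a b c : ℕ → ℕ}

theorem pad_infix {w X : List Bool} (q : ℕ) (h : w <:+: X) :
    w <:+: ones q ++ X ++ ones q := by
  refine h.trans ⟨ones q, ones q, ?_⟩
  simp [List.append_assoc]

theorem main_count (N : Nice a b c) {k q : ℕ}
    (hlag : qsh a b c (k+1) + c (k+1) ≤ c (k+3))
    (hq1 : c (k+3) < q) (hq2 : q ≤ c (k+4)) :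
    cplx a b c q ≤ q * (5 * b (k+3) + 4) := by
  have hq : 1 ≤ q := by
    have := N.hc (k+3) (by omega)
    omega
  have hsub : {w | w ∈ qsL a b c ∧ w.length = q}
      ⊆ SubQ q (ones q ++ qsB a b c (k+4) ++ ones q) := by
    rintro w ⟨⟨j, hj1, hjw⟩, hwl⟩
    refine ⟨hwl, ?_⟩
    by_cases hj : j ≤ k + 4
    · exact pad_infix q (hjw.trans
        (qsB_prefix_mono a b c N.ha N.hb j (k+4) hj1 hj).isInfix)
    · obtain ⟨j', rfl⟩ : ∃ j', j = (k + 3) + 1 + j' := ⟨j - (k+4), by omega⟩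
      exact descent N (by omega) hq hq2 j' w hwl (pad_infix q hjw)
  have hc1 : cplx a b c q ≤ (SubQ q (ones q ++ qsB a b c (k+4) ++ ones q)).ncard :=
    Set.ncard_le_ncard hsub (subq_finite _ _)
  have hb32 : b (k+2) ≤ b (k+3) := N.hbm _ (by omega)
  have hb21 : b (k+1) ≤ b (k+2) := N.hbm _ (by omega)
  by_cases hA : (qsB a b c (k+3)).length + c (k+3) ≤ q
  · have := base_count N (by omega : 1 ≤ k + 3) hq hA
    rw [(show k + 3 + 1 = k + 4 by omega)] at this
    have hfin : q * (3 * b (k+3) + 3) + 1 ≤ q * (5 * b (k+3) + 4) := by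
      have h1 : 1 ≤ q * (2 * b (k+3) + 1) := Nat.one_le_iff_ne_zero.mpr (by positivity)
      nlinarith
    omega
  · by_cases hB : (qsB a b c (k+2)).length + c (k+2) ≤ q
    · have e1 := climb N (by omega : 1 ≤ k + 3) hq (by omega)
      have e2 := base_count N (by omega : 1 ≤ k + 2) hq hB
      rw [(show k + 3 + 1 = k + 4 by omega)] at e1
      rw [(show k + 2 + 1 = k + 3 by omega)] at e1 e2
      have hfin : q * (3 * b (k+2) + 3) + 1 + q * b (k+3) ≤ q * (5 * b (k+3) + 4) := by
        nlinarith
      omega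
    · have e1 := climb N (by omega : 1 ≤ k + 3) hq (by omega)
      have e2 := climb N (by omega : 1 ≤ k + 2) hq (by omega)
      have e3 : (qsB a b c (k+1)).length + c (k+1) ≤ q := by
        rw [length_qsB]
        omega
      have e4 := base_count N (by omega : 1 ≤ k + 1) hq e3
      rw [(show k + 3 + 1 = k + 4 by omega)] at e1
      rw [(show k + 2 + 1 = k + 3 by omega)] at e1 e2
      rw [(show k + 1 + 1 = k + 2 by omega)] at e2 e4
      have hfin : q * (3 * b (k+1) + 3) + 1 + q * b (k+2) + q * b (k+3)
          ≤ q * (5 * b (k+3) + 4) := by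
        nlinarith
      omega

end QSaux


namespace QSaux

/-- The recursive construction: state `n` is `(b n, c n, h n)`, driven by a
threshold function `T`. -/
def mkState (T : ℕ → ℕ) : ℕ → ℕ × ℕ × ℕ
  | 0 => (1, 0, 0)
  | 1 => (1, 1, 1)
  | (n+2) =>
      let s1 := mkState T (n+1)
      let s0 := mkState T n
      let h2 := (2^(n+1) * s1.1 + 1) * s1.2.2 + 2^(n+1) * s1.1 * s1.2.1
        + 2^(n+1) * s1.1 * (s1.1 - 1) / 2
      let c2 := max (max (s1.2.1 + s1.1) (s0.2.2 + s0.2.1)) (n + 5)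
      let b2 := if T ((s1.1+1) * (5*(s1.1+1) + 4)) + 1 ≤ c2 then s1.1 + 1 else s1.1
      (b2, c2, h2)

def mkB (T : ℕ → ℕ) (n : ℕ) : ℕ := (mkState T n).1
def mkC (T : ℕ → ℕ) (n : ℕ) : ℕ := (mkState T n).2.1
def mkH (T : ℕ → ℕ) (n : ℕ) : ℕ := (mkState T n).2.2

variable (T : ℕ → ℕ)

theorem mkC_def (n : ℕ) : mkC T (n+2)
    = max (max (mkC T (n+1) + mkB T (n+1)) (mkH T n + mkC T n)) (n + 5) := rfl

theorem mkH_def (n : ℕ) : mkH T (n+2)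
    = (2^(n+1) * mkB T (n+1) + 1) * mkH T (n+1) + 2^(n+1) * mkB T (n+1) * mkC T (n+1)
      + 2^(n+1) * mkB T (n+1) * (mkB T (n+1) - 1) / 2 := rfl

theorem mkB_def (n : ℕ) : mkB T (n+2)
    = if T ((mkB T (n+1)+1) * (5*(mkB T (n+1)+1) + 4)) + 1 ≤ mkC T (n+2)
      then mkB T (n+1) + 1 else mkB T (n+1) := rfl

theorem mkH_eq_qsh (n : ℕ) : qsh (fun m => 2^m) (mkB T) (mkC T) n = mkH T n := by
  induction n using Nat.strong_induction_on with
  | _ n ih =>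
    match n with
    | 0 => rfl
    | 1 => rfl
    | (m+2) =>
        rw [qsh, mkH_def, ih (m+1) (by omega)]

theorem mkB_pos (n : ℕ) : 1 ≤ mkB T n := by
  induction n using Nat.strong_induction_on with
  | _ n ih =>
    match n with
    | 0 => exact le_refl 1
    | 1 => exact le_refl 1
    | (m+2) =>
        rw [mkB_def]
        have := ih (m+1) (by omega)
        split <;> omega

theorem mkB_mono_succ (n : ℕ) : mkB T n ≤ mkB T (n+1) := by
  match n with
  | 0 => exact le_refl 1
  | (m+1) =>
      rw [(show m+1+1 = m+2 from rfl), mkB_def]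
      split <;> omega

theorem mkB_step (n : ℕ) : mkB T (n+2) ≤ mkB T (n+1) + 1 := by
  rw [mkB_def]; split <;> omega

theorem mkB_le (n : ℕ) : mkB T n ≤ n + 1 := by
  induction n using Nat.strong_induction_on with
  | _ n ih =>
    match n with
    | 0 => exact le_refl 1
    | 1 =>
        have : mkB T 1 = 1 := rfl
        omega
    | (m+2) =>
        have h1 := mkB_step T m
        have h2 := ih (m+1) (by omega)
        omega

theorem mkC_ge (n : ℕ) : n + 3 ≤ mkC T (n+2) := by
  rw [mkC_def]
  exact le_trans (by omega) (le_max_right _ _)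

theorem mkC_gap (n : ℕ) : mkC T (n+1) + mkB T (n+1) ≤ mkC T (n+2) := by
  rw [mkC_def]
  exact le_trans (le_max_left _ _) (le_max_left _ _)

theorem mkC_pos (n : ℕ) : 1 ≤ mkC T (n+1) := by
  match n with
  | 0 => exact le_refl 1
  | (m+1) => rw [(show m+1+1 = m+2 from rfl)]; have := mkC_ge T m; omega

theorem mkC_mono_succ (n : ℕ) : mkC T n ≤ mkC T (n+1) := by
  match n with
  | 0 => simp [mkC, mkState]
  | (m+1) =>
      rw [(show m+1+1 = m+2 from rfl)]
      have h1 := mkC_gap T m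
      have h2 := mkB_pos T (m+1)
      omega

theorem mkC_mono : ∀ m n, m ≤ n → mkC T m ≤ mkC T n := by
  intro m n h
  induction n with
  | zero => rw [Nat.le_zero.mp h]
  | succ k ih =>
      rcases Nat.eq_or_lt_of_le h with rfl | hlt
      · rfl
      · exact le_trans (ih (by omega)) (mkC_mono_succ T k)

theorem mkBC (n : ℕ) : mkB T (n+1) ≤ mkC T (n+1) := by
  induction n using Nat.strong_induction_on with
  | _ n ih =>
    match n with
    | 0 => exact le_refl 1
    | (m+1) =>
        rw [(show m+1+1 = m+2 from rfl)]
        have h1 := mkB_step T m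
        have h2 : mkB T (m+1) ≤ mkC T (m+1) := ih m (by omega)
        have h3 := mkC_gap T m
        have h4 := mkB_pos T (m+1)
        omega

theorem mkH_lag (k : ℕ) : mkH T (k+1) + mkC T (k+1) ≤ mkC T (k+3) := by
  have h := mkC_def T (k+1)
  rw [(show k+1+2 = k+3 from rfl), (show k+1+1 = k+2 from rfl)] at h
  rw [h]
  exact le_trans (le_max_right _ _) (le_max_left _ _)

theorem mkH_pos (n : ℕ) : 1 ≤ mkH T (n+1) := by
  induction n with
  | zero => exact le_refl 1
  | succ m ih =>
      rw [mkH_def]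
      have h3 : mkH T (m+1) ≤ (2^(m+1) * mkB T (m+1) + 1) * mkH T (m+1) :=
        Nat.le_mul_of_pos_left _ (by positivity)
      omega

theorem mkH_growth (n : ℕ) : 2^(n+1) * mkH T (n+1) ≤ mkH T (n+2) := by
  rw [mkH_def]
  have h1 : 2^(n+1) ≤ 2^(n+1) * mkB T (n+1) + 1 := by
    have := mkB_pos T (n+1)
    calc 2^(n+1) = 2^(n+1) * 1 := by ring
      _ ≤ 2^(n+1) * mkB T (n+1) := Nat.mul_le_mul_left _ this
      _ ≤ _ := Nat.le_succ _
  have h2 : 2^(n+1) * mkH T (n+1) ≤ (2^(n+1) * mkB T (n+1) + 1) * mkH T (n+1) :=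
    Nat.mul_le_mul_right _ h1
  omega

theorem mkH_mono_succ (n : ℕ) : mkH T n ≤ mkH T (n+1) := by
  match n with
  | 0 => exact Nat.zero_le _
  | (m+1) =>
      rw [(show m+1+1 = m+2 from rfl)]
      refine le_trans ?_ (mkH_growth T m)
      exact Nat.le_mul_of_pos_left _ (by positivity)

theorem mkH_mono : ∀ m n, m ≤ n → mkH T m ≤ mkH T n := by
  intro m n h
  induction n with
  | zero => rw [Nat.le_zero.mp h]
  | succ k ih =>
      rcases Nat.eq_or_lt_of_le h with rfl | hlt
      · rfl
      · exact le_trans (ih (by omega)) (mkH_mono_succ T k)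

theorem mkH_ge_pow (n : ℕ) : 2^n ≤ mkH T (n+1) := by
  induction n with
  | zero => exact le_refl 1
  | succ m ih =>
      refine le_trans ?_ (mkH_growth T m)
      calc 2^(m+1) = 2^(m+1) * 1 := by ring
        _ ≤ 2^(m+1) * mkH T (m+1) := Nat.mul_le_mul_left _ (mkH_pos T m)

end QSaux


namespace QSaux

variable (T : ℕ → ℕ)

/-- the threshold invariant for `b`. -/
theorem mkB_inv (n : ℕ) :
    mkB T n = 1 ∨ T ((mkB T n) * (5 * (mkB T n) + 4)) + 1 ≤ mkC T n := by
  induction n using Nat.strong_induction_on with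
  | _ n ih =>
    match n with
    | 0 => exact Or.inl rfl
    | 1 => exact Or.inl rfl
    | (m+2) =>
        rw [mkB_def]
        split
        · right
          assumption
        · rcases ih (m+1) (by omega) with h | h
          · exact Or.inl h
          · exact Or.inr (le_trans h (mkC_mono_succ T (m+1)))

theorem mkB_mono : Monotone (mkB T) := monotone_nat_of_le_succ (mkB_mono_succ T)

theorem mkB_unbounded : Tendsto (mkB T) atTop atTop := by
  classical
  refine tendsto_atTop_atTop_of_monotone' (mkB_mono T) ?_
  rintro ⟨V, hV⟩
  have hbV : ∀ n, mkB T n ≤ V := fun n => hV ⟨n, rfl⟩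
  set P : ℕ → Prop := fun k => ∃ n, mkB T n = k with hP
  have hP1 : P 1 := ⟨0, rfl⟩
  have h1V : 1 ≤ V := le_trans (le_of_eq rfl) (hbV 0)
  set W := Nat.findGreatest P V with hW
  have hWspec : P W := Nat.findGreatest_spec h1V hP1
  have hWub : ∀ n, mkB T n ≤ W := fun n => Nat.le_findGreatest (hbV n) ⟨n, rfl⟩
  obtain ⟨n₁, hn₁⟩ := hWspec
  have hconst : ∀ m, n₁ ≤ m → mkB T m = W := by
    intro m hm
    exact le_antisymm (hWub m) (hn₁ ▸ mkB_mono T hm)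
  set N := T ((W+1) * (5*(W+1) + 4)) + 1 with hN
  set m := max n₁ N with hm
  have hbm : mkB T (m+1) = W := hconst (m+1) (by omega)
  have hcond : T ((mkB T (m+1)+1) * (5*(mkB T (m+1)+1) + 4)) + 1 ≤ mkC T (m+2) := by
    rw [hbm]
    have := mkC_ge T m
    omega
  have : mkB T (m+2) = W + 1 := by
    rw [mkB_def, if_pos hcond, hbm]
  have := hconst (m+2) (by omega)
  omega

/-- upper bound for `c`. -/
theorem mkC_upper (n : ℕ) :
    mkC T (n+2) ≤ 5 * mkH T n + (mkC T 2 + mkC T 3 + 20) := by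
  induction n using Nat.strong_induction_on with
  | _ n ih =>
    match n with
    | 0 =>
        rw [(show (0:ℕ)+2 = 2 from rfl)]
        omega
    | 1 =>
        rw [(show (1:ℕ)+2 = 3 from rfl)]
        omega
    | (m+2) =>
        have ih1 : mkC T (m+3) ≤ 5 * mkH T (m+1) + (mkC T 2 + mkC T 3 + 20) :=
          ih (m+1) (by omega)
        have ih0 : mkC T (m+2) ≤ 5 * mkH T m + (mkC T 2 + mkC T 3 + 20) :=
          ih m (by omega)
        rw [(show m+2+2 = (m+2)+2 from rfl), mkC_def]
        simp only [max_le_iff]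
        have hb3 : mkB T (m+3) ≤ m + 4 := mkB_le T (m+3)
        have hg1 : 2 * mkH T (m+2) ≤ mkH T (m+3) := by
          have := mkH_growth T (m+1)
          have h2 : 2 ≤ 2^(m+2) := by
            have : (1:ℕ) ≤ 2^(m+1) := Nat.one_le_two_pow
            calc (2:ℕ) = 2 * 1 := rfl
              _ ≤ 2 * 2^(m+1) := by omega
              _ = 2^(m+2) := by ring
          calc 2 * mkH T (m+2) ≤ 2^(m+2) * mkH T (m+2) := Nat.mul_le_mul_right _ h2
            _ ≤ mkH T (m+3) := by
                have := mkH_growth T (m+1)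
                rw [(show m+1+1 = m+2 from rfl), (show m+1+2 = m+3 from rfl)] at this
                exact this
        have hg0 : 2 * mkH T (m+1) ≤ mkH T (m+2) := by
          have h2 : 2 ≤ 2^(m+1) := by
            have : (1:ℕ) ≤ 2^m := Nat.one_le_two_pow
            calc (2:ℕ) = 2 * 1 := rfl
              _ ≤ 2 * 2^m := by omega
              _ = 2^(m+1) := by ring
          calc 2 * mkH T (m+1) ≤ 2^(m+1) * mkH T (m+1) := Nat.mul_le_mul_right _ h2
            _ ≤ mkH T (m+2) := mkH_growth T m
        have hpow : m + 4 ≤ 5 * mkH T (m+1) := by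
          have h1 := mkH_ge_pow T m
          have h2 : m < 2^m := Nat.lt_two_pow_self
          omega
        have hpos2 : 1 ≤ mkH T (m+1) := mkH_pos T m
        have hg00 : mkH T m ≤ mkH T (m+1) := mkH_mono_succ T m
        refine ⟨⟨?_, ?_⟩, ?_⟩
        · -- c_{m+3} + b_{m+3} ≤ 5 h_{m+2} + C₀
          rw [(show m+2+1 = m+3 from rfl)]
          omega
        · -- h_{m+2} + c_{m+2} ≤ 5 h_{m+2} + C₀
          omega
        · -- m + 7 ≤ ...
          omega

/-- eventual smallness of `(c+b)·2ⁿ` w.r.t. `h`. -/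
theorem mk_summable_bound :
    ∃ N, ∀ n, N ≤ n → (mkC T n + mkB T n) * 2^n ≤ mkH T n := by
  set C₀ := mkC T 2 + mkC T 3 + 20 with hC₀
  refine ⟨C₀ + 25, ?_⟩
  intro n hn
  obtain ⟨m, rfl⟩ : ∃ m, n = m + 2 := ⟨n - 2, by omega⟩
  have h1 : mkC T (m+2) ≤ 5 * mkH T m + C₀ := mkC_upper T m
  have h2 : mkB T (m+2) ≤ m + 3 := mkB_le T (m+2)
  -- h_{m+2} ≥ 2^{m+1} · 2^m · h_m  and  h_{m+2} ≥ 2^{m+1}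
  have hg1 : 2^(m+1) * mkH T (m+1) ≤ mkH T (m+2) := mkH_growth T m
  have hg0 : 2^m * mkH T m ≤ mkH T (m+1) := by
    rcases m with _ | j
    · show 2^0 * 0 ≤ mkH T 1
      simp
    · exact mkH_growth T j
  have hgep : 2^(m+1) ≤ mkH T (m+2) := mkH_ge_pow T (m+1)
  -- h_m ≥ C₀ + m + 6 eventually
  have hm23 : C₀ + 23 ≤ m := by omega
  have hhm : C₀ + m + 6 ≤ mkH T m := by
    obtain ⟨j, rfl⟩ : ∃ j, m = j + 1 := ⟨m - 1, by omega⟩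
    have h3 : 2^j ≤ mkH T (j+1) := mkH_ge_pow T j
    -- 2^j ≥ C₀ + j + 7 since j ≥ C₀ + 22
    have h4 : C₀ + j + 7 ≤ 2^j := by
      have h5 : 2 * j ≤ 2^j := by
        have := Nat.lt_two_pow_self (n := j-1)
        have h6 : 2^j = 2 * 2^(j-1) := by
          rw [← pow_succ']
          congr 1
          omega
        omega
      omega
    omega
  -- now: (c+b)·2^{m+2} ≤ (5h_m + C₀ + m + 3)·2^{m+2} ≤ 6·h_m·2^{m+2} ≤ 2^{2m+1}·h_m ≤ h_{m+2}
  have key1 : (mkC T (m+2) + mkB T (m+2)) ≤ 6 * mkH T m := by omega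
  have key2 : 6 * mkH T m * 2^(m+2) ≤ 2^(m+1) * (2^m * mkH T m) := by
    have h7 : 6 * 2^(m+2) ≤ 2^(2*m+1) := by
      have h8 : (2:ℕ)^(2*m+1) = 2^(m+2) * 2^(m-1) := by
        rw [← pow_add]
        congr 1
        omega
      have h9 : 8 ≤ 2^(m-1) := by
        calc (8:ℕ) = 2^3 := rfl
          _ ≤ 2^(m-1) := Nat.pow_le_pow_right (by omega) (by omega)
      calc 6 * 2^(m+2) ≤ 2^(m+2) * 8 := by omega
        _ ≤ 2^(m+2) * 2^(m-1) := Nat.mul_le_mul_left _ h9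
        _ = 2^(2*m+1) := h8.symm
    calc 6 * mkH T m * 2^(m+2) = (6 * 2^(m+2)) * mkH T m := by ring
      _ ≤ 2^(2*m+1) * mkH T m := Nat.mul_le_mul_right _ h7
      _ = 2^(m+1) * (2^m * mkH T m) := by rw [← mul_assoc, ← pow_add]; congr 2; omega
  have key3 : 2^(m+1) * (2^m * mkH T m) ≤ mkH T (m+2) :=
    le_trans (Nat.mul_le_mul_left _ hg0) hg1
  calc (mkC T (m+2) + mkB T (m+2)) * 2^(m+2) ≤ 6 * mkH T m * 2^(m+2) :=
        Nat.mul_le_mul_right _ key1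
    _ ≤ 2^(m+1) * (2^m * mkH T m) := key2
    _ ≤ mkH T (m+2) := key3

/-- eventual smallness of `a·b²·2ⁿ` w.r.t. `h`. -/
theorem mk_ab2_bound :
    ∃ N, ∀ n, N ≤ n → 2^n * (mkB T n)^2 * 2^n ≤ mkH T n := by
  refine ⟨11, ?_⟩
  intro n hn
  obtain ⟨j, rfl⟩ : ∃ j, n = j + 4 := ⟨n - 4, by omega⟩
  have hb : mkB T (j+4) ≤ j + 5 := mkB_le T (j+4)
  -- h_{j+4} ≥ 2^{4j+6}
  have a1 : 2^j ≤ mkH T (j+1) := mkH_ge_pow T j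
  have a2 : 2^(j+1) * mkH T (j+1) ≤ mkH T (j+2) := mkH_growth T j
  have a3 : 2^(j+2) * mkH T (j+2) ≤ mkH T (j+3) := by
    have := mkH_growth T (j+1)
    rwa [(show j+1+1 = j+2 from rfl), (show j+1+2 = j+3 from rfl)] at this
  have a4 : 2^(j+3) * mkH T (j+3) ≤ mkH T (j+4) := by
    have := mkH_growth T (j+2)
    rwa [(show j+2+1 = j+3 from rfl), (show j+2+2 = j+4 from rfl)] at this
  have hbig : 2^(4*j+6) ≤ mkH T (j+4) := by
    have c1 : 2^(j+1) * 2^j ≤ mkH T (j+2) :=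
      le_trans (Nat.mul_le_mul_left _ a1) a2
    have c2 : 2^(j+2) * (2^(j+1) * 2^j) ≤ mkH T (j+3) :=
      le_trans (Nat.mul_le_mul_left _ c1) a3
    have c3 : 2^(j+3) * (2^(j+2) * (2^(j+1) * 2^j)) ≤ mkH T (j+4) :=
      le_trans (Nat.mul_le_mul_left _ c2) a4
    calc 2^(4*j+6) = 2^(j+3) * (2^(j+2) * (2^(j+1) * 2^j)) := by
          rw [← pow_add, ← pow_add, ← pow_add]; congr 1; ring
      _ ≤ mkH T (j+4) := c3
  -- (j+9)² ≤ 2^{2j-2}, j ≥ 7 ; here we need 2^{2(j+4)}·(j+5)² ≤ 2^{4j+6}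
  have hsq : (j+5)^2 ≤ 2^(2*j - 2) := by
    obtain ⟨i, rfl⟩ : ∃ i, j = i + 7 := ⟨j - 7, by omega⟩
    have : ∀ i : ℕ, (i + 12)^2 ≤ 2^(2*i + 12) := by
      intro i
      induction i with
      | zero => norm_num
      | succ k ih =>
          have e1 : (k+1+12)^2 ≤ 2 * (k+12)^2 := by
            rw [pow_two, pow_two]
            nlinarith [Nat.zero_le k]
          have e3 : (2:ℕ)^(2*(k+1)+12) = 2^(2*k+12) * 4 := by
            rw [(show 2*(k+1)+12 = (2*k+12)+2 by ring), pow_add]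
            norm_num
          have e2 : (2:ℕ) * 2^(2*k+12) ≤ 2^(2*(k+1)+12) := by
            rw [e3]
            omega
          exact le_trans e1 (le_trans (Nat.mul_le_mul_left 2 ih) e2)
      -- (i+12)² ≤ 2^{2i+12} = 2^{2(i+7)-2}
    have h := this i
    rwa [(show 2*(i+7) - 2 = 2*i + 12 by omega), (show i+7+5 = i+12 from rfl)]
  calc 2^(j+4) * (mkB T (j+4))^2 * 2^(j+4)
      ≤ 2^(j+4) * (j+5)^2 * 2^(j+4) := by
        have : (mkB T (j+4))^2 ≤ (j+5)^2 := Nat.pow_le_pow_left hb 2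
        exact Nat.mul_le_mul_right _ (Nat.mul_le_mul_left _ this)
    _ ≤ 2^(j+4) * 2^(2*j-2) * 2^(j+4) := by
        have := hsq
        exact Nat.mul_le_mul_right _ (Nat.mul_le_mul_left _ this)
    _ = 2^((j+4) + (2*j-2) + (j+4)) := by rw [← pow_add, ← pow_add]
    _ ≤ 2^(4*j+6) := Nat.pow_le_pow_right (by omega) (by omega)
    _ ≤ mkH T (j+4) := hbig

end QSaux



open QSaux

/-- For any `f : ℕ → ℕ` with `f q → ∞`, there is a quasi-staircase (given by
nondecreasing sequences of positive integers `a`, `b`, `c` tending to infinity with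
`c 1 ≥ 1` and `c (n+1) ≥ c n + b n`) satisfying `a n * b n ^ 2 / h n → 0` and
`∑ (c n + b n) / h n < ∞`, whose word complexity satisfies `p q / (q * f q) → 0`. -/
theorem qs_complexity_close_to_linear (f : ℕ → ℕ)
    (hf : Tendsto f atTop atTop) :
    ∃ a b c : ℕ → ℕ, QShyp a b c ∧
      Tendsto (fun n => ((a n * b n ^ 2 : ℕ) : ℝ) / ((qsh a b c n : ℕ) : ℝ))
        atTop (nhds 0) ∧
      Summable (fun n => (((c n + b n : ℕ)) : ℝ) / ((qsh a b c n : ℕ) : ℝ)) ∧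
      Tendsto (fun q => ((cplx a b c q : ℕ) : ℝ) / (((q * f q : ℕ)) : ℝ))
        atTop (nhds 0) := by
  classical
  have hTex : ∀ M : ℕ, ∃ N, ∀ q, N ≤ q → M ≤ f q := by
    intro M
    obtain ⟨N, hN⟩ := Filter.eventually_atTop.1 (hf.eventually_ge_atTop M)
    exact ⟨N, fun q hq => hN q hq⟩
  choose T hT using hTex
  set a : ℕ → ℕ := fun n => 2^n with ha
  set b : ℕ → ℕ := mkB T with hb
  set c : ℕ → ℕ := mkC T with hc
  have hH : ∀ n, qsh a b c n = mkH T n := mkH_eq_qsh T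
  have hNice : Nice a b c := by
    refine ⟨fun n _ => Nat.one_le_two_pow, fun n _ => mkB_pos T n, ?_,
      fun n _ => mkC_mono_succ T n, fun n _ => mkB_mono_succ T n, ?_⟩
    · intro n hn
      obtain ⟨m, rfl⟩ : ∃ m, n = m + 1 := ⟨n - 1, by omega⟩
      exact mkC_pos T m
    · intro n hn
      obtain ⟨m, rfl⟩ : ∃ m, n = m + 1 := ⟨n - 1, by omega⟩
      exact mkBC T m
  -- a helper for the geometric bounds
  have div_le_half_pow : ∀ (x h n : ℕ), 1 ≤ h → x * 2^n ≤ h →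
      (x:ℝ)/(h:ℝ) ≤ (1/2:ℝ)^n := by
    intro x h n hh hx
    have hhp : (0:ℝ) < h := by exact_mod_cast hh
    rw [div_le_iff₀ hhp]
    have h2 : ((x:ℝ) * (2:ℝ)^n) ≤ (h:ℝ) := by exact_mod_cast hx
    have e : (1/2:ℝ)^n * ((x:ℝ) * (2:ℝ)^n) = x := by
      rw [one_div, inv_pow]
      field_simp
    calc (x:ℝ) = (1/2:ℝ)^n * ((x:ℝ) * (2:ℝ)^n) := e.symm
      _ ≤ (1/2:ℝ)^n * (h:ℝ) := by
          apply mul_le_mul_of_nonneg_left h2 (by positivity)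
  refine ⟨a, b, c, ?_, ?_, ?_, ?_⟩
  · -- QShyp
    refine ⟨fun n _ => ⟨Nat.one_le_two_pow, Nat.pow_le_pow_right (by omega) (by omega)⟩,
      ?_, fun n _ => ⟨mkB_pos T n, mkB_mono_succ T n⟩, mkB_unbounded T, ?_, ?_, ?_⟩
    · exact tendsto_atTop_mono (fun n => (Nat.lt_two_pow_self (n := n)).le) tendsto_id
    · intro n hn
      obtain ⟨m, rfl⟩ : ∃ m, n = m + 1 := ⟨n - 1, by omega⟩
      exact ⟨mkC_pos T m, mkC_mono_succ T (m+1)⟩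
    · refine tendsto_atTop_mono' atTop (Filter.eventually_atTop.mpr ⟨2, fun n hn => ?_⟩)
        tendsto_id
      obtain ⟨m, rfl⟩ : ∃ m, n = m + 2 := ⟨n - 2, by omega⟩
      have h9 := mkC_ge T m
      rw [← hc] at h9
      simp only [id]
      omega
    · intro n hn
      obtain ⟨m, rfl⟩ : ∃ m, n = m + 1 := ⟨n - 1, by omega⟩
      exact mkC_gap T m
  · -- a b² / h → 0
    obtain ⟨N₄, hN₄⟩ := mk_ab2_bound T
    apply squeeze_zero' (g := fun n => (1/2:ℝ)^n)
    · filter_upwards with n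
      positivity
    · rw [Filter.eventually_atTop]
      refine ⟨max N₄ 1, fun n hn => ?_⟩
      have h1 : 1 ≤ mkH T n := by
        obtain ⟨m, rfl⟩ : ∃ m, n = m + 1 := ⟨n - 1, by omega⟩
        exact mkH_pos T m
      have h2 := hN₄ n (le_trans (le_max_left _ _) hn)
      rw [hH n]
      exact div_le_half_pow _ _ n h1 (by
        calc 2^n * b n ^ 2 * 2^n = 2^n * (b n)^2 * 2^n := by ring
          _ ≤ mkH T n := h2)
    · exact tendsto_pow_atTop_nhds_zero_of_lt_one (by norm_num) (by norm_num)
  · -- summability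
    obtain ⟨N₅, hN₅⟩ := mk_summable_bound T
    set N := max N₅ 1 with hN
    rw [← summable_nat_add_iff N]
    refine Summable.of_nonneg_of_le (fun k => by positivity) (fun k => ?_)
      (summable_geometric_of_lt_one (by norm_num) (by norm_num) : Summable fun k => (1/2:ℝ)^k)
    have h1 : 1 ≤ mkH T (k + N) := by
      obtain ⟨m, hm⟩ : ∃ m, k + N = m + 1 := ⟨k + N - 1, by omega⟩
      rw [hm]
      exact mkH_pos T m
    have h2 := hN₅ (k + N) (by omega)
    rw [hH (k + N)]
    refine le_trans (div_le_half_pow _ _ (k+N) h1 h2) ?_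
    exact pow_le_pow_of_le_one (by norm_num) (by norm_num) (by omega)
  · -- complexity
    rw [Metric.tendsto_atTop]
    intro ε hε
    obtain ⟨v, hv⟩ := exists_nat_gt (1/ε)
    have hv0 : (0:ℝ) < v := lt_trans (by positivity) hv
    have hv0' : 1 ≤ v := by exact_mod_cast Nat.one_le_iff_ne_zero.mpr (by
      intro h; rw [h] at hv0; simp at hv0)
    obtain ⟨n₁, hn₁⟩ := Filter.eventually_atTop.1 ((mkB_unbounded T).eventually_ge_atTop (v+1))
    set n₀ := max n₁ 3 with hn₀
    refine ⟨c n₀ + 1, fun q hq => ?_⟩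
    have hq1' : c n₀ < q := by omega
    have hcn₀ : n₀ ≤ c n₀ := by
      obtain ⟨m, hm⟩ : ∃ m, n₀ = m + 2 := ⟨n₀ - 2, by omega⟩
      rw [hm]
      have h9 := mkC_ge T m
      rw [← hc] at h9
      omega
    set P : ℕ → Prop := fun m => c m < q with hP
    have hPn₀ : P n₀ := hq1'
    have hn₀q : n₀ ≤ q := by omega
    set n := Nat.findGreatest P q with hn
    have hnn₀ : n₀ ≤ n := Nat.le_findGreatest hn₀q hPn₀
    have hPn : P n := Nat.findGreatest_spec hn₀q hPn₀
    have hcnn : n ≤ c n := by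
      obtain ⟨m, hm⟩ : ∃ m, n = m + 2 := ⟨n - 2, by omega⟩
      rw [hm]
      have h9 := mkC_ge T m
      rw [← hc] at h9
      omega
    have hq2 : q ≤ c (n+1) := by
      by_contra hcon
      push_neg at hcon
      have : n + 1 ≤ n := Nat.le_findGreatest (by omega) hcon
      omega
    obtain ⟨k, hk⟩ : ∃ k, n = k + 3 := ⟨n - 3, by omega⟩
    have hlag : qsh a b c (k+1) + c (k+1) ≤ c (k+3) := by
      rw [hH]
      have h9 := mkH_lag T k
      rw [← hc] at h9
      exact h9
    have hcount : cplx a b c q ≤ q * (5 * b n + 4) := by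
      rw [hk]
      exact main_count hNice hlag (by rw [← hk]; exact hPn) (by
        rw [(show k+4 = k+3+1 from rfl), ← hk]; exact hq2)
    have hbn : v + 1 ≤ b n := hn₁ n (by omega)
    have hinv : T (b n * (5 * b n + 4)) + 1 ≤ c n := by
      rcases mkB_inv T n with h | h
      · rw [← hb] at h
        omega
      · rw [← hb, ← hc] at h
        exact h
    have hfq : b n * (5 * b n + 4) ≤ f q := hT _ q (by omega)
    -- nat inequality : cplx q * v ≤ q * f q
    have hkey : cplx a b c q * v ≤ q * f q := by
      calc cplx a b c q * v ≤ (q * (5 * b n + 4)) * v := Nat.mul_le_mul_right _ hcount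
        _ = q * (v * (5 * b n + 4)) := by ring
        _ ≤ q * (b n * (5 * b n + 4)) :=
            Nat.mul_le_mul_left _ (Nat.mul_le_mul_right _ (by omega))
        _ ≤ q * f q := Nat.mul_le_mul_left _ hfq
    have hqf0 : 0 < q * f q := by
      have h1 : 0 < q := by omega
      have h2 : 0 < f q := by
        have h3 : 1 ≤ b n * (5 * b n + 4) := by
          have h9 := mkB_pos T n
          rw [← hb] at h9
          nlinarith
        omega
      exact Nat.mul_pos h1 h2
    have hqf0' : (0:ℝ) < ((q * f q : ℕ):ℝ) := by exact_mod_cast hqf0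
    have hratio : ((cplx a b c q : ℕ):ℝ) / ((q * f q : ℕ):ℝ) ≤ 1 / v := by
      rw [div_le_div_iff₀ hqf0' hv0]
      have : ((cplx a b c q * v : ℕ):ℝ) ≤ ((q * f q : ℕ):ℝ) := by exact_mod_cast hkey
      push_cast at this ⊢
      linarith
    have h1v : (1:ℝ)/v < ε := by
      rw [div_lt_iff₀ hv0]
      rw [div_lt_iff₀ hε] at hv
      linarith [mul_comm (ε) (v:ℝ)]
    have hnn : (0:ℝ) ≤ ((cplx a b c q : ℕ):ℝ) / ((q * f q : ℕ):ℝ) :=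
      div_nonneg (Nat.cast_nonneg _) (Nat.cast_nonneg _)
    show dist (((cplx a b c q : ℕ):ℝ) / ((q * f q : ℕ):ℝ)) 0 < ε
    rw [Real.dist_eq, sub_zero, abs_of_nonneg hnn]
    exact lt_of_le_of_lt hratio h1v
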